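/- Let L and X be as above (graph on vertex set L). Then the triangle-square complex of X is simply connected: every combinatorial loop in X is null-homotopic in the 2-complex obtained by filling every 3-cycle with a triangle and every induced 4-cycle with a square. -/

import Mathlib

open SimpleGraph

/-- The graph `X` on the vertex set `L`, with an edge between `x` and `y` iff
`x ≤ y ≤ x + 1` or `y ≤ x ≤ y + 1`, where `x + 1 = T x` for the order automorphism `T`
generating the `ℤ`-action. -/
def stepGraph {L : Type*} [Lattice L] (T : L ≃o L) : SimpleGraph L where
  Adj x y := x ≠ y ∧ ((x ≤ y ∧ y ≤ T x) ∨ (y ≤ x ∧ x ≤ T y))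
  symm := ⟨by rintro x y ⟨hne, h⟩; exact ⟨hne.symm, h.symm⟩⟩
  loopless := ⟨by rintro x ⟨hne, -⟩; exact hne rfl⟩

/-- Homotopy of walks in the triangle-square complex of a graph `G`: the
equivalence relation on walks (with fixed endpoints) generated by removing backtracks
and by replacing one side of a filled triangle (any 3-cycle) or of a filled square
(any induced 4-cycle) by the other side. -/
inductive TriSqHomotopic {V : Type*} (G : SimpleGraph V) :
    ∀ {u v : V}, G.Walk u v → G.Walk u v → Prop
  | refl {u v : V} (p : G.Walk u v) : TriSqHomotopic G p p
  | symm {u v : V} {p q : G.Walk u v} : TriSqHomotopic G p q → TriSqHomotopic G q p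
  | trans {u v : V} {p q r : G.Walk u v} :
      TriSqHomotopic G p q → TriSqHomotopic G q r → TriSqHomotopic G p r
  | append_left {u v w : V} (p : G.Walk u v) {q r : G.Walk v w} :
      TriSqHomotopic G q r → TriSqHomotopic G (p.append q) (p.append r)
  | append_right {u v w : V} {p q : G.Walk u v} (r : G.Walk v w) :
      TriSqHomotopic G p q → TriSqHomotopic G (p.append r) (q.append r)
  | backtrack {u v : V} (h : G.Adj u v) :
      TriSqHomotopic G (SimpleGraph.Walk.cons h (SimpleGraph.Walk.cons h.symm SimpleGraph.Walk.nil))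
        SimpleGraph.Walk.nil
  | triangle {a b c : V} (hab : G.Adj a b) (hbc : G.Adj b c) (hac : G.Adj a c) :
      TriSqHomotopic G (SimpleGraph.Walk.cons hab (SimpleGraph.Walk.cons hbc SimpleGraph.Walk.nil))
        (SimpleGraph.Walk.cons hac SimpleGraph.Walk.nil)
  | square {a b c d : V} (hab : G.Adj a b) (hbc : G.Adj b c) (had : G.Adj a d)
      (hdc : G.Adj d c) (hac : ¬ G.Adj a c) (hbd : ¬ G.Adj b d) (hac' : a ≠ c) (hbd' : b ≠ d) :
      TriSqHomotopic G (SimpleGraph.Walk.cons hab (SimpleGraph.Walk.cons hbc SimpleGraph.Walk.nil))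
        (SimpleGraph.Walk.cons had (SimpleGraph.Walk.cons hdc SimpleGraph.Walk.nil))


section Aux

variable {V : Type*} {G : SimpleGraph V}

private lemma TSH_loop_short {a : V} (q : G.Walk a a) (h : q.length ≤ 1) :
    q = SimpleGraph.Walk.nil := by
  cases q with
  | nil => rfl
  | cons h' q' =>
    cases q' with
    | nil => exact absurd h' (G.loopless.irrefl a)
    | cons h'' q'' => simp [SimpleGraph.Walk.length_cons] at h

private lemma TSH_short_unique {a b : V} (p q : G.Walk a b)
    (hp : p.length ≤ 1) (hq : q.length ≤ 1) : p = q := by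
  cases p with
  | nil => exact (TSH_loop_short q hq).symm
  | cons h' p' =>
    cases p' with
    | nil =>
      cases q with
      | nil => exact absurd h' (G.loopless.irrefl a)
      | cons h'' q' =>
        cases q' with
        | nil => rfl
        | cons h3 q3 => simp [SimpleGraph.Walk.length_cons] at hq
    | cons h2 p2 => simp [SimpleGraph.Walk.length_cons] at hp

private lemma TSH_mem_short_support {u w : V} (e : G.Walk u w) (he : e.length ≤ 1)
    {x : V} (hx : x ∈ e.support) : x = u ∨ x = w := by
  cases e with
  | nil => simp [SimpleGraph.Walk.support_nil] at hx; exact Or.inl hx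
  | cons h' e' =>
    cases e' with
    | nil =>
      simp [SimpleGraph.Walk.support_cons, SimpleGraph.Walk.support_nil] at hx
      tauto
    | cons h'' e'' => simp [SimpleGraph.Walk.length_cons] at he

private lemma TSH_quad {a b c d : V} (hab : G.Adj a b) (hbc : G.Adj b c)
    (had : G.Adj a d) (hdc : G.Adj d c) :
    TriSqHomotopic G
      (SimpleGraph.Walk.cons hab (SimpleGraph.Walk.cons hbc SimpleGraph.Walk.nil))
      (SimpleGraph.Walk.cons had (SimpleGraph.Walk.cons hdc SimpleGraph.Walk.nil)) := by
  classical
  by_cases hbd' : b = d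
  · subst hbd'; exact TriSqHomotopic.refl _
  by_cases hac' : a = c
  · subst hac'
    exact (TriSqHomotopic.backtrack hab).trans (TriSqHomotopic.backtrack had).symm
  by_cases hac : G.Adj a c
  · exact (TriSqHomotopic.triangle hab hbc hac).trans
      (TriSqHomotopic.triangle had hdc hac).symm
  by_cases hbd : G.Adj b d
  · have h2 := TriSqHomotopic.append_left (SimpleGraph.Walk.cons hab SimpleGraph.Walk.nil)
      (TriSqHomotopic.triangle hbd hdc hbc)
    have h4 := TriSqHomotopic.append_right (SimpleGraph.Walk.cons hdc SimpleGraph.Walk.nil)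
      (TriSqHomotopic.triangle hab hbd had)
    exact (TriSqHomotopic.symm h2).trans h4
  · exact TriSqHomotopic.square hab hbc had hdc hac hbd hac' hbd'

private lemma TSH_step {a c : V} (h : G.Adj a c) (fa fc : V)
    (ha : a = fa ∨ G.Adj a fa) (hc : c = fc ∨ G.Adj c fc)
    (he : fa = fc ∨ G.Adj fa fc) :
    ∃ (la : G.Walk a fa) (lc : G.Walk c fc) (e : G.Walk fa fc),
      la.length ≤ 1 ∧ lc.length ≤ 1 ∧ e.length ≤ 1 ∧
      TriSqHomotopic G (la.append e)
        ((SimpleGraph.Walk.cons h SimpleGraph.Walk.nil).append lc) := by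
  rcases ha with ha | Ha
  · subst ha
    rcases hc with hc | Hc
    · subst hc
      refine ⟨SimpleGraph.Walk.nil, SimpleGraph.Walk.nil,
        SimpleGraph.Walk.cons h SimpleGraph.Walk.nil, by simp, by simp, by simp, ?_⟩
      rw [SimpleGraph.Walk.append_nil]
      exact TriSqHomotopic.refl _
    · rcases he with he | He
      · subst he
        refine ⟨SimpleGraph.Walk.nil, SimpleGraph.Walk.cons Hc SimpleGraph.Walk.nil,
          SimpleGraph.Walk.nil, by simp, by simp, by simp, ?_⟩
        exact (TriSqHomotopic.backtrack h).symm
      · refine ⟨SimpleGraph.Walk.nil, SimpleGraph.Walk.cons Hc SimpleGraph.Walk.nil,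
          SimpleGraph.Walk.cons He SimpleGraph.Walk.nil, by simp, by simp, by simp, ?_⟩
        exact (TriSqHomotopic.triangle h Hc He).symm
  · rcases hc with hc | Hc
    · subst hc
      rcases he with he | He
      · subst he
        refine ⟨SimpleGraph.Walk.cons Ha SimpleGraph.Walk.nil, SimpleGraph.Walk.nil,
          SimpleGraph.Walk.nil, by simp, by simp, by simp, ?_⟩
        simp only [SimpleGraph.Walk.append_nil]
        exact TriSqHomotopic.refl _
      · refine ⟨SimpleGraph.Walk.cons Ha SimpleGraph.Walk.nil, SimpleGraph.Walk.nil,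
          SimpleGraph.Walk.cons He SimpleGraph.Walk.nil, by simp, by simp, by simp, ?_⟩
        rw [SimpleGraph.Walk.append_nil]
        exact TriSqHomotopic.triangle Ha He h
    · rcases he with he | He
      · subst he
        refine ⟨SimpleGraph.Walk.cons Ha SimpleGraph.Walk.nil,
          SimpleGraph.Walk.cons Hc SimpleGraph.Walk.nil,
          SimpleGraph.Walk.nil, by simp, by simp, by simp, ?_⟩
        rw [SimpleGraph.Walk.append_nil]
        exact (TriSqHomotopic.triangle h Hc Ha).symm
      · refine ⟨SimpleGraph.Walk.cons Ha SimpleGraph.Walk.nil,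
          SimpleGraph.Walk.cons Hc SimpleGraph.Walk.nil,
          SimpleGraph.Walk.cons He SimpleGraph.Walk.nil, by simp, by simp, by simp, ?_⟩
        exact TSH_quad Ha He h Hc

private lemma TSH_deform (f : V → V)
    (hedge : ∀ u w : V, G.Adj u w → f u = f w ∨ G.Adj (f u) (f w)) :
    ∀ {a b : V} (p : G.Walk a b), (∀ u ∈ p.support, u = f u ∨ G.Adj u (f u)) →
    ∃ (q : G.Walk (f a) (f b)) (la : G.Walk a (f a)) (lb : G.Walk b (f b)),
      la.length ≤ 1 ∧ lb.length ≤ 1 ∧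
      TriSqHomotopic G (la.append q) (p.append lb) ∧
      ∀ x ∈ q.support, ∃ u ∈ p.support, f u = x := by
  intro a b p
  induction p with
  | @nil a0 =>
    intro hv
    have hla : ∃ la : G.Walk a0 (f a0), la.length ≤ 1 := by
      rcases hv a0 (by simp) with ha | Ha
      · exact ⟨(SimpleGraph.Walk.nil : G.Walk a0 a0).copy rfl ha, by simp⟩
      · exact ⟨SimpleGraph.Walk.cons Ha SimpleGraph.Walk.nil, by simp⟩
    obtain ⟨la, hla⟩ := hla
    refine ⟨SimpleGraph.Walk.nil, la, la, hla, hla, ?_, ?_⟩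
    · rw [SimpleGraph.Walk.append_nil]
      exact TriSqHomotopic.refl _
    · intro x hx
      simp [SimpleGraph.Walk.support_nil] at hx
      exact ⟨a0, by simp, hx.symm⟩
  | @cons a c b h p ih =>
    intro hv
    have hva := hv a (by simp)
    have hvc : c = f c ∨ G.Adj c (f c) := hv c (by simp)
    obtain ⟨q', la', lb, hla', hlb, hom', hsupp'⟩ := ih (fun u hu => hv u (by simp [hu]))
    obtain ⟨la, lc, e, hla, hlc, hle, hom0⟩ := TSH_step h (f a) (f c) hva hvc (hedge a c h)
    have hlceq : lc = la' := TSH_short_unique lc la' hlc hla'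
    subst hlceq
    refine ⟨e.append q', la, lb, hla, hlb, ?_, ?_⟩
    · have h1 : TriSqHomotopic G (la.append (e.append q')) ((la.append e).append q') := by
        rw [SimpleGraph.Walk.append_assoc]
        exact TriSqHomotopic.refl _
      have h2 := TriSqHomotopic.append_right q' hom0
      have h3 : TriSqHomotopic G
          (((SimpleGraph.Walk.cons h SimpleGraph.Walk.nil).append lc).append q')
          ((SimpleGraph.Walk.cons h SimpleGraph.Walk.nil).append (lc.append q')) := by
        rw [← SimpleGraph.Walk.append_assoc]
        exact TriSqHomotopic.refl _
      have h4 := TriSqHomotopic.append_left (SimpleGraph.Walk.cons h SimpleGraph.Walk.nil) hom'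
      exact h1.trans (h2.trans (h3.trans h4))
    · intro x hx
      rw [SimpleGraph.Walk.mem_support_append_iff] at hx
      rcases hx with hx | hx
      · rcases TSH_mem_short_support e hle hx with rfl | rfl
        · exact ⟨a, by simp, rfl⟩
        · exact ⟨c, by simp, rfl⟩
      · obtain ⟨u, hu, hux⟩ := hsupp' x hx
        exact ⟨u, by simp [hu], hux⟩

private lemma TSH_loop_aux {v w : V} (hw : w = v) (q : G.Walk w w)
    (la lb : G.Walk v w) (hla : la.length ≤ 1) (hlb : lb.length ≤ 1)
    (p : G.Walk v v) (hom : TriSqHomotopic G (la.append q) (p.append lb)) :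
    TriSqHomotopic G p (q.copy hw hw) := by
  subst hw
  rw [TSH_loop_short la hla, TSH_loop_short lb hlb, SimpleGraph.Walk.append_nil,
    SimpleGraph.Walk.nil_append] at hom
  rw [SimpleGraph.Walk.copy_rfl_rfl]
  exact hom.symm

private lemma TSH_deform_loop (f : V → V)
    (hedge : ∀ u w : V, G.Adj u w → f u = f w ∨ G.Adj (f u) (f w))
    {v : V} (hfv : f v = v) (p : G.Walk v v)
    (hvert : ∀ u ∈ p.support, u = f u ∨ G.Adj u (f u)) :
    ∃ q : G.Walk v v, TriSqHomotopic G p q ∧ ∀ x ∈ q.support, ∃ u ∈ p.support, f u = x := by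
  obtain ⟨q, la, lb, hla, hlb, hom, hsupp⟩ := TSH_deform f hedge p hvert
  refine ⟨q.copy hfv hfv, TSH_loop_aux hfv q la lb hla hlb p hom, ?_⟩
  intro x hx
  rw [SimpleGraph.Walk.support_copy] at hx
  exact hsupp x hx

private lemma TSH_const_loop {v : V} (p : G.Walk v v) (h : ∀ u ∈ p.support, u = v) :
    p = SimpleGraph.Walk.nil := by
  cases p with
  | nil => rfl
  | cons h' p' =>
    have hc := h _ (by
      rw [SimpleGraph.Walk.support_cons]
      exact List.mem_cons_of_mem _ p'.start_mem_support)
    exact absurd h' (by rw [hc]; exact G.loopless.irrefl v)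

end Aux

section StepAux

variable {L : Type*} [Lattice L] (T : L ≃o L)

private lemma TSH_pow_succ (a : ℤ) (x : L) : T ((T ^ a) x) = (T ^ (a + 1)) x := by
  have : (a + 1 : ℤ) = 1 + a := by ring
  rw [this, zpow_one_add]
  rfl

private lemma TSH_zpow_mono (hinc : ∀ x : L, x < T x) (v : L) :
    ∀ a b : ℤ, a ≤ b → (T ^ a) v ≤ (T ^ b) v := by
  have step1 : ∀ a : ℤ, (T ^ a) v ≤ (T ^ (a + 1)) v := by
    intro a
    rw [← TSH_pow_succ]
    exact (hinc _).le
  intro a b hab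
  obtain ⟨n, rfl⟩ : ∃ n : ℕ, b = a + n := ⟨(b - a).toNat, by omega⟩
  clear hab
  induction n with
  | zero => simp
  | succ n ih =>
    have he : (a + ((n : ℕ) + 1 : ℕ) : ℤ) = (a + (n : ℕ)) + 1 := by push_cast; ring
    rw [he]
    exact ih.trans (step1 _)

private lemma TSH_hedge_sup (hinc : ∀ x : L, x < T x) (z : L) :
    ∀ u w : L, (stepGraph T).Adj u w →
      u ⊔ z = w ⊔ z ∨ (stepGraph T).Adj (u ⊔ z) (w ⊔ z) := by
  intro u w hadj
  obtain ⟨hne, hcase⟩ := hadj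
  by_cases heq : u ⊔ z = w ⊔ z
  · exact Or.inl heq
  right
  rcases hcase with ⟨h1, h2⟩ | ⟨h1, h2⟩
  · refine ⟨heq, Or.inl ⟨sup_le_sup_right h1 z, ?_⟩⟩
    rw [map_sup]
    exact sup_le (h2.trans le_sup_left) ((hinc z).le.trans le_sup_right)
  · refine ⟨heq, Or.inr ⟨sup_le_sup_right h1 z, ?_⟩⟩
    rw [map_sup]
    exact sup_le (h2.trans le_sup_left) ((hinc z).le.trans le_sup_right)

private lemma TSH_hedge_inf (hinc : ∀ x : L, x < T x) (z : L) :
    ∀ u w : L, (stepGraph T).Adj u w →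
      u ⊓ z = w ⊓ z ∨ (stepGraph T).Adj (u ⊓ z) (w ⊓ z) := by
  intro u w hadj
  obtain ⟨hne, hcase⟩ := hadj
  by_cases heq : u ⊓ z = w ⊓ z
  · exact Or.inl heq
  right
  rcases hcase with ⟨h1, h2⟩ | ⟨h1, h2⟩
  · refine ⟨heq, Or.inl ⟨inf_le_inf_right z h1, ?_⟩⟩
    rw [map_inf]
    exact le_inf ((inf_le_left).trans h2) ((inf_le_right).trans (hinc z).le)
  · refine ⟨heq, Or.inr ⟨inf_le_inf_right z h1, ?_⟩⟩
    rw [map_inf]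
    exact le_inf ((inf_le_left).trans h2) ((inf_le_right).trans (hinc z).le)

private lemma TSH_hvert_sup (hinc : ∀ x : L, x < T x) (z u : L) (hz : z ≤ T u) :
    u = u ⊔ z ∨ (stepGraph T).Adj u (u ⊔ z) := by
  by_cases h : u ⊔ z = u
  · exact Or.inl h.symm
  · exact Or.inr ⟨fun e => h e.symm, Or.inl ⟨le_sup_left, sup_le (hinc u).le hz⟩⟩

private lemma TSH_hvert_inf (hinc : ∀ x : L, x < T x) (z u : L) (hz : u ≤ T z) :
    u = u ⊓ z ∨ (stepGraph T).Adj u (u ⊓ z) := by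
  by_cases h : u ⊓ z = u
  · exact Or.inl h.symm
  · refine Or.inr ⟨fun e => h e.symm, Or.inr ⟨inf_le_left, ?_⟩⟩
    rw [map_inf]
    exact le_inf (hinc u).le hz

end StepAux


section Main

variable {L : Type*} [Lattice L] (T : L ≃o L)

private lemma TSH_bound_list (hinc : ∀ x : L, x < T x)
    (hcof : ∀ x y : L, ∃ k : ℕ, (T ^ (k : ℤ))⁻¹ x ≤ y ∧ y ≤ (T ^ (k : ℤ)) x)
    (v : L) (l : List L) :
    ∃ m : ℕ, ∀ u ∈ l, (T ^ (-(m : ℤ))) v ≤ u ∧ u ≤ (T ^ (m : ℤ)) v := by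
  induction l with
  | nil => exact ⟨0, by simp⟩
  | cons x l ih =>
    obtain ⟨m, hm⟩ := ih
    obtain ⟨k, hk1, hk2⟩ := hcof v x
    rw [← zpow_neg] at hk1
    refine ⟨max m k, fun u hu => ?_⟩
    rcases List.mem_cons.mp hu with rfl | hu
    · exact ⟨(TSH_zpow_mono T hinc v _ _ (by push_cast; omega)).trans hk1,
        hk2.trans (TSH_zpow_mono T hinc v _ _ (by push_cast; omega))⟩
    · exact ⟨(TSH_zpow_mono T hinc v _ _ (by push_cast; omega)).trans (hm u hu).1,
        (hm u hu).2.trans (TSH_zpow_mono T hinc v _ _ (by push_cast; omega))⟩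

private lemma TSH_ascend (hinc : ∀ x : L, x < T x) (v : L) (m : ℕ) :
    ∀ (d : ℕ) (p : (stepGraph T).Walk v v),
      (∀ u ∈ p.support, (T ^ (-(d : ℤ))) v ≤ u ∧ u ≤ (T ^ (m : ℤ)) v) →
      ∃ q : (stepGraph T).Walk v v, TriSqHomotopic (stepGraph T) p q ∧
        ∀ u ∈ q.support, v ≤ u ∧ u ≤ (T ^ (m : ℤ)) v := by
  have h0 : (T ^ (0 : ℤ)) v = v := by simp
  intro d
  induction d with
  | zero =>
    intro p hp
    refine ⟨p, TriSqHomotopic.refl p, fun u hu => ⟨?_, (hp u hu).2⟩⟩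
    have h1 := (hp u hu).1
    simpa using h1
  | succ d ih =>
    intro p hp
    have hzv : (T ^ (-(d : ℤ))) v ≤ v := h0 ▸ TSH_zpow_mono T hinc v _ 0 (by omega)
    have hfv : v ⊔ (T ^ (-(d : ℤ))) v = v := sup_eq_left.mpr hzv
    obtain ⟨q, hpq, hsupp⟩ := TSH_deform_loop (fun u => u ⊔ (T ^ (-(d : ℤ))) v)
      (TSH_hedge_sup T hinc _) hfv p (by
        intro u hu
        apply TSH_hvert_sup T hinc
        have h1 := (hp u hu).1
        have h2 := T.monotone h1
        have hcast : (-(((d : ℕ) + 1 : ℕ) : ℤ)) + 1 = -(d : ℤ) := by push_cast; ring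
        rw [TSH_pow_succ, hcast] at h2
        exact h2)
    obtain ⟨q', hqq', hs'⟩ := ih q (by
      intro u hu
      obtain ⟨w, hw, rfl⟩ := hsupp u hu
      exact ⟨le_sup_right, sup_le (hp w hw).2 (hzv.trans (h0 ▸ TSH_zpow_mono T hinc v 0 _ (by omega)))⟩)
    exact ⟨q', hpq.trans hqq', hs'⟩

private lemma TSH_descend (hinc : ∀ x : L, x < T x) (v : L) :
    ∀ (n : ℕ) (p : (stepGraph T).Walk v v),
      (∀ u ∈ p.support, v ≤ u ∧ u ≤ (T ^ (n : ℤ)) v) →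
      TriSqHomotopic (stepGraph T) p SimpleGraph.Walk.nil := by
  intro n
  induction n with
  | zero =>
    intro p hp
    have hp' : p = SimpleGraph.Walk.nil := TSH_const_loop p (fun u hu =>
      le_antisymm (by simpa using (hp u hu).2) (hp u hu).1)
    rw [hp']
    exact TriSqHomotopic.refl _
  | succ n ih =>
    intro p hp
    have h0 : (T ^ (0 : ℤ)) v = v := by simp
    have hvz : v ≤ (T ^ (n : ℤ)) v := h0 ▸ TSH_zpow_mono T hinc v 0 _ (by omega)
    have hfv : v ⊓ (T ^ (n : ℤ)) v = v := inf_eq_left.mpr hvz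
    obtain ⟨q, hpq, hsupp⟩ := TSH_deform_loop (fun u => u ⊓ (T ^ (n : ℤ)) v)
      (TSH_hedge_inf T hinc _) hfv p (by
        intro u hu
        apply TSH_hvert_inf T hinc
        have h2 := (hp u hu).2
        have hcast : ((n : ℤ)) + 1 = (((n : ℕ) + 1 : ℕ) : ℤ) := by push_cast; ring
        rw [TSH_pow_succ, hcast]
        exact h2)
    refine hpq.trans (ih q ?_)
    intro u hu
    obtain ⟨w, hw, rfl⟩ := hsupp u hu
    exact ⟨le_inf (hp w hw).1 hvz, inf_le_right⟩

end Main

/-- Lemma 3.6. The triangle-square complex of the graph `X` on `L` is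
simply connected: every combinatorial loop is null-homotopic in the 2-complex obtained by
filling in every 3-cycle with a triangle and every induced 4-cycle with a square. -/
theorem stepGraph_simply_connected {L : Type*} [Lattice L] (T : L ≃o L)
    (hjoin : ∀ S : Set L, S.Nonempty → BddAbove S → ∃ j, IsLUB S j)
    (hinc : ∀ x : L, x < T x)
    (hcof : ∀ x y : L, ∃ k : ℕ, (T ^ (k : ℤ))⁻¹ x ≤ y ∧ y ≤ (T ^ (k : ℤ)) x)
    (v : L) (p : (stepGraph T).Walk v v) :
    TriSqHomotopic (stepGraph T) p SimpleGraph.Walk.nil := by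
  obtain ⟨m, hm⟩ := TSH_bound_list T hinc hcof v p.support
  obtain ⟨q, hpq, hq⟩ := TSH_ascend T hinc v m m p hm
  exact hpq.trans (TSH_descend T hinc v m q hq)
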